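/- The conditional min-entropy of a convex combination is at least the minimum over the components: if ρ_{AB} = Σᵢ pᵢ ρⁱ_{AB} with {pᵢ} a probability distribution over finitely many states ρⁱ_{AB}, then for every ε ≥ 0, H_min^ε(A|B)_ρ ≥ minᵢ H_min^ε(A|B)_{ρⁱ}. -/

import Mathlib

open Matrix
open scoped ComplexOrder Classical

/-- The trace norm `‖X‖₁ = Tr √(XᴴX)` of a complex matrix. -/
noncomputable def traceNorm {n : Type*} [Fintype n] [DecidableEq n] (X : Matrix n n ℂ) : ℝ :=
  (((Matrix.posSemidef_conjTranspose_mul_self X).1.eigenvectorUnitary.1 *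
    diagonal (((↑) : ℝ → ℂ) ∘ Real.sqrt ∘ (Matrix.posSemidef_conjTranspose_mul_self X).1.eigenvalues) *
    (star (Matrix.posSemidef_conjTranspose_mul_self X).1.eigenvectorUnitary : Matrix n n ℂ)).trace).re

/-- The positive semidefinite square root, extended by `0` off the PSD cone. -/
noncomputable def msqrt {n : Type*} [Fintype n] [DecidableEq n] (X : Matrix n n ℂ) : Matrix n n ℂ :=
  if h : X.PosSemidef then h.1.eigenvectorUnitary.1 * diagonal (((↑) : ℝ → ℂ) ∘ Real.sqrt ∘ h.1.eigenvalues) *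
    (star h.1.eigenvectorUnitary : Matrix n n ℂ) else 0

/-- The fidelity `F(ρ,σ) = ‖√ρ √σ‖₁²`. -/
noncomputable def fidelity {n : Type*} [Fintype n] [DecidableEq n] (ρ σ : Matrix n n ℂ) : ℝ :=
  (traceNorm (msqrt ρ * msqrt σ)) ^ 2

open scoped Kronecker

/-- The generalized fidelity for sub-normalized states. -/
noncomputable def gFidelity {n : Type*} [Fintype n] [DecidableEq n] (ρ σ : Matrix n n ℂ) : ℝ :=
  (Real.sqrt (fidelity ρ σ) + Real.sqrt ((1 - ρ.trace.re) * (1 - σ.trace.re))) ^ 2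

/-- The purified distance `P(ρ,σ) = √(1 - F_*(ρ,σ))`. -/
noncomputable def purifiedDist {n : Type*} [Fintype n] [DecidableEq n] (ρ σ : Matrix n n ℂ) : ℝ :=
  Real.sqrt (1 - gFidelity ρ σ)

/-- The conditional min-entropy `H_min(A|B)_ρ = -log min {Tr σ_B : ρ_{AB} ≤ I_A ⊗ σ_B}`. -/
noncomputable def Hmin {A B : Type*} [Fintype A] [Fintype B] [DecidableEq A] [DecidableEq B]
    (ρ : Matrix (A × B) (A × B) ℂ) : ℝ :=
  - Real.logb 2 (sInf {t : ℝ | ∃ σ : Matrix B B ℂ, σ.PosSemidef ∧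
      ((1 : Matrix A A ℂ) ⊗ₖ σ - ρ).PosSemidef ∧ t = σ.trace.re})

/-- The `ε`-smooth conditional min-entropy: supremum of `H_min` over sub-normalized states
within purified distance `ε`. -/
noncomputable def HminSmooth {A B : Type*} [Fintype A] [Fintype B] [DecidableEq A] [DecidableEq B]
    (ε : ℝ) (ρ : Matrix (A × B) (A × B) ℂ) : ℝ :=
  sSup {x : ℝ | ∃ ρ' : Matrix (A × B) (A × B) ℂ, ρ'.PosSemidef ∧ ρ'.trace.re ≤ 1 ∧
      purifiedDist ρ' ρ ≤ ε ∧ x = Hmin ρ'}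

/-- The conditional max-entropy `H_max(A|B)_ρ = log max_{σ_B} F(ρ_{AB}, I_A ⊗ σ_B)`. -/
noncomputable def Hmax {A B : Type*} [Fintype A] [Fintype B] [DecidableEq A] [DecidableEq B]
    (ρ : Matrix (A × B) (A × B) ℂ) : ℝ :=
  Real.logb 2 (sSup {x : ℝ | ∃ σ : Matrix B B ℂ, σ.PosSemidef ∧ σ.trace = 1 ∧
      x = fidelity ρ ((1 : Matrix A A ℂ) ⊗ₖ σ)})

/-- The `ε`-smooth conditional max-entropy. -/
noncomputable def HmaxSmooth {A B : Type*} [Fintype A] [Fintype B] [DecidableEq A] [DecidableEq B]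
    (ε : ℝ) (ρ : Matrix (A × B) (A × B) ℂ) : ℝ :=
  sSup {x : ℝ | ∃ ρ' : Matrix (A × B) (A × B) ℂ, ρ'.PosSemidef ∧ ρ'.trace.re ≤ 1 ∧
      purifiedDist ρ' ρ ≤ ε ∧ x = Hmax ρ'}


section AuxBasic
set_option linter.unusedSectionVars false

variable {n : Type*} [Fintype n] [DecidableEq n]

lemma psd_diag_nonneg {M : Matrix n n ℂ} (hM : M.PosSemidef) (i : n) : 0 ≤ M i i := by
  have h := hM.dotProduct_mulVec_nonneg (Pi.single i 1)
  simpa [dotProduct, Matrix.mulVec, Pi.single_apply] using h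

lemma psd_trace_re_nonneg {M : Matrix n n ℂ} (hM : M.PosSemidef) : 0 ≤ M.trace.re := by
  rw [Matrix.trace, Complex.re_sum]
  exact Finset.sum_nonneg fun i _ => (Complex.le_def.mp (psd_diag_nonneg hM i)).1

lemma psd_smul {M : Matrix n n ℂ} (hM : M.PosSemidef) {c : ℝ} (hc : 0 ≤ c) :
    ((c : ℂ) • M).PosSemidef := by
  constructor
  · unfold Matrix.IsHermitian
    rw [Matrix.conjTranspose_smul, hM.1]
    simp
  · have : (0:ℂ) ≤ (c:ℂ) := by exact_mod_cast Complex.zero_le_real.mpr hc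
    exact (hM.smul this).2

lemma msqrt_of {M : Matrix n n ℂ} (hM : M.PosSemidef) : msqrt M =
    hM.1.eigenvectorUnitary.1 * diagonal (((↑) : ℝ → ℂ) ∘ Real.sqrt ∘ hM.1.eigenvalues) *
    (star hM.1.eigenvectorUnitary : Matrix n n ℂ) := dif_pos hM

open scoped MatrixOrder in
lemma msqrt_eq_cfc {M : Matrix n n ℂ} (hM : M.PosSemidef) : msqrt M = CFC.sqrt M := by
  rw [CFC.sqrt_eq_real_sqrt M hM.nonneg, cfcₙ_eq_cfc, Matrix.IsHermitian.cfc_eq hM.1, Matrix.IsHermitian.cfc,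
    Unitary.conjStarAlgAut_apply]
  exact dif_pos hM

open scoped MatrixOrder in
lemma msqrt_psd {M : Matrix n n ℂ} (hM : M.PosSemidef) : (msqrt M).PosSemidef := by
  rw [msqrt_eq_cfc hM]; exact Matrix.nonneg_iff_posSemidef.mp (CFC.sqrt_nonneg M)

lemma msqrt_herm {M : Matrix n n ℂ} (hM : M.PosSemidef) : (msqrt M)ᴴ = msqrt M :=
  (msqrt_psd hM).1

open scoped MatrixOrder in
lemma msqrt_mul_self {M : Matrix n n ℂ} (hM : M.PosSemidef) : msqrt M * msqrt M = M := by
  rw [msqrt_eq_cfc hM]; exact CFC.sqrt_mul_sqrt_self M hM.nonneg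

open scoped MatrixOrder in
lemma msqrt_eq {M S : Matrix n n ℂ} (hM : M.PosSemidef) (hS : S.PosSemidef)
    (h : S * S = M) : msqrt M = S := by
  rw [msqrt_eq_cfc hM]
  exact CFC.sqrt_unique h hS.nonneg

lemma psd_trace_mul_re_nonneg {P Q : Matrix n n ℂ} (hP : P.PosSemidef) (hQ : Q.PosSemidef) :
    0 ≤ (P * Q).trace.re := by
  have h1 : ((msqrt P)ᴴ * Q * msqrt P).trace = (P * Q).trace := by
    rw [msqrt_herm hP, Matrix.trace_mul_cycle, msqrt_mul_self hP]
  rw [← h1]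
  exact psd_trace_re_nonneg (hQ.conjTranspose_mul_mul_same _)

end AuxBasic

section AuxPD
set_option linter.unusedSectionVars false
set_option maxHeartbeats 1000000

variable {n : Type*} [Fintype n] [DecidableEq n]

lemma pd_smul_one {c : ℝ} (hc : 0 < c) : ((c:ℂ) • (1 : Matrix n n ℂ)).PosDef := by
  constructor
  · unfold Matrix.IsHermitian
    rw [Matrix.conjTranspose_smul, Matrix.conjTranspose_one]
    simp
  · have h2 : (0:ℂ) < (c:ℂ) := by exact_mod_cast Complex.zero_lt_real.mpr hc
    exact (Matrix.PosDef.one.smul h2).2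

lemma psd_posDef_of_isUnit {M : Matrix n n ℂ} (hM : M.PosSemidef) (h : IsUnit M) :
    M.PosDef := by
  exact hM.posDef_iff_isUnit.mpr h

lemma pd_sqrt {M : Matrix n n ℂ} (hM : M.PosDef) : (msqrt M).PosDef := by
  refine psd_posDef_of_isUnit (msqrt_psd hM.posSemidef) ?_
  rw [Matrix.isUnit_iff_isUnit_det]
  have hdet : (msqrt M).det * (msqrt M).det = M.det := by
    rw [← Matrix.det_mul, msqrt_mul_self hM.posSemidef]
  have : M.det ≠ 0 := hM.det_pos.ne'
  rw [isUnit_iff_ne_zero]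
  intro h0
  rw [h0, mul_zero] at hdet
  exact this hdet.symm

lemma pd_inv_herm {M : Matrix n n ℂ} (hM : M.PosDef) : (M⁻¹)ᴴ = M⁻¹ := by
  rw [Matrix.conjTranspose_nonsing_inv, hM.1]

lemma pd_mul_inv {M : Matrix n n ℂ} (hM : M.PosDef) : M * M⁻¹ = 1 :=
  Matrix.mul_nonsing_inv _ hM.det_pos.ne'.isUnit

lemma pd_inv_mul {M : Matrix n n ℂ} (hM : M.PosDef) : M⁻¹ * M = 1 :=
  Matrix.nonsing_inv_mul _ hM.det_pos.ne'.isUnit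

/-- abbreviation: real trace of the PSD square root -/
noncomputable def sqrtTr (M : Matrix n n ℂ) : ℝ := (msqrt M).trace.re

lemma sqrtTr_nonneg {M : Matrix n n ℂ} (hM : M.PosSemidef) : 0 ≤ sqrtTr M :=
  psd_trace_re_nonneg (msqrt_psd hM)

/-- Variational upper bound: `Tr √H ≤ (Tr(H T⁻¹) + Tr T)/2` for `T` positive definite. -/
lemma lemA {H T : Matrix n n ℂ} (hH : H.PosSemidef) (hT : T.PosDef) :
    sqrtTr H ≤ ((H * T⁻¹).trace.re + T.trace.re) / 2 := by
  set R := msqrt T with hRdef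
  have hR : R.PosDef := pd_sqrt hT
  set S := msqrt H with hSdef
  have hS : S.PosSemidef := msqrt_psd hH
  set X := R - R⁻¹ * S with hXdef
  have hXc : Xᴴ = R - S * R⁻¹ := by
    rw [hXdef, Matrix.conjTranspose_sub, Matrix.conjTranspose_mul, hR.posSemidef.1,
      pd_inv_herm hR, hS.1]
  have hRR : R * R = T := msqrt_mul_self hT.posSemidef
  have hRinv2 : R⁻¹ * R⁻¹ = T⁻¹ := by rw [← Matrix.mul_inv_rev, hRR]
  have key : Xᴴ * X = T + S * T⁻¹ * S - S - S := by
    rw [hXc, hXdef]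
    rw [Matrix.sub_mul, Matrix.mul_sub, Matrix.mul_sub]
    rw [hRR]
    have e1 : R * (R⁻¹ * S) = S := by rw [← Matrix.mul_assoc, pd_mul_inv hR, Matrix.one_mul]
    have e2 : S * R⁻¹ * R = S := by rw [Matrix.mul_assoc, pd_inv_mul hR, Matrix.mul_one]
    have e3 : S * R⁻¹ * (R⁻¹ * S) = S * T⁻¹ * S := by
      rw [Matrix.mul_assoc, ← Matrix.mul_assoc R⁻¹, hRinv2, ← Matrix.mul_assoc]
    rw [e1, e2, e3]
    abel
  have htr : (S * T⁻¹ * S).trace = (H * T⁻¹).trace := by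
    rw [Matrix.trace_mul_cycle, hSdef, msqrt_mul_self hH]
  have hpos := psd_trace_re_nonneg (Matrix.posSemidef_conjTranspose_mul_self X)
  rw [key] at hpos
  simp only [Matrix.trace_add, Matrix.trace_sub, Complex.add_re, Complex.sub_re] at hpos
  rw [htr] at hpos
  unfold sqrtTr
  rw [← hSdef]
  linarith [hpos]

/-- Near-optimality of `T = √H + γ`: the `Tr (H T⁻¹)` term is at most `Tr √H`. -/
lemma lemB1 {H : Matrix n n ℂ} (hH : H.PosSemidef) {γ : ℝ} (hγ : 0 < γ) :
    (H * (msqrt H + (γ:ℂ) • 1)⁻¹).trace.re ≤ sqrtTr H := by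
  set S := msqrt H with hSdef
  have hS : S.PosSemidef := msqrt_psd hH
  set T := S + (γ:ℂ) • 1 with hTdef
  have hT : T.PosDef := Matrix.PosDef.posSemidef_add hS (pd_smul_one hγ)
  have hid : H * T⁻¹ = T * S * T⁻¹ - (γ:ℂ) • (S * T⁻¹) := by
    have h1 : T * S = H + (γ:ℂ) • S := by
      rw [hTdef, Matrix.add_mul, msqrt_mul_self hH, Matrix.smul_mul, Matrix.one_mul]
    rw [h1, Matrix.add_mul, Matrix.smul_mul]
    abel
  have htr1 : (T * S * T⁻¹).trace = S.trace := by
    rw [Matrix.trace_mul_cycle, pd_inv_mul hT, Matrix.one_mul]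
  have htr2 : 0 ≤ (S * T⁻¹).trace.re := psd_trace_mul_re_nonneg hS hT.inv.posSemidef
  rw [hid, Matrix.trace_sub, Matrix.trace_smul, htr1]
  simp only [Complex.sub_re, smul_eq_mul, Complex.mul_re, Complex.ofReal_re, Complex.ofReal_im]
  unfold sqrtTr
  rw [← hSdef]
  nlinarith [htr2]

lemma trace_one_re : ((1 : Matrix n n ℂ)).trace.re = (Fintype.card n : ℝ) := by
  rw [Matrix.trace_one]
  simp

lemma lemB2 {H : Matrix n n ℂ} {γ : ℝ} :
    ((msqrt H) + (γ:ℂ) • 1).trace.re = sqrtTr H + (Fintype.card n : ℝ) * γ := by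
  rw [Matrix.trace_add, Matrix.trace_smul, Complex.add_re]
  unfold sqrtTr
  congr 1
  rw [Matrix.trace_one]
  simp [mul_comm]

end AuxPD

section AuxOrder
set_option linter.unusedSectionVars false
set_option maxHeartbeats 2000000

variable {n : Type*} [Fintype n] [DecidableEq n]

lemma card_mul_div_le (c ε : ℝ) (hc : 0 ≤ c) (hε : 0 < ε) :
    c * (ε / (c + 1)) ≤ ε := by
  calc c * (ε / (c + 1)) ≤ (c + 1) * (ε / (c + 1)) := by
        apply mul_le_mul_of_nonneg_right (by linarith) (by positivity)
    _ = ε := by field_simp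

lemma psd_conj {M : Matrix n n ℂ} (hM : M.PosSemidef) {C : Matrix n n ℂ} (hC : Cᴴ = C) :
    (C * M * C).PosSemidef := by
  have := hM.conjTranspose_mul_mul_same C
  rwa [hC] at this

lemma pd_conj {M : Matrix n n ℂ} (hM : M.PosDef) {C : Matrix n n ℂ} (hC : C.PosDef) :
    (C⁻¹ * M * C⁻¹).PosDef := by
  refine psd_posDef_of_isUnit (psd_conj hM.posSemidef (pd_inv_herm hC)) ?_
  have h1 : IsUnit (C⁻¹ : Matrix n n ℂ) := by
    rw [Matrix.isUnit_nonsing_inv_iff]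
    exact hC.isUnit
  exact (h1.mul hM.isUnit).mul h1


/-- Inverse is antitone on positive definite matrices. -/
lemma lemE {P Q : Matrix n n ℂ} (hP : P.PosDef) (hQ : Q.PosDef)
    (h : (Q - P).PosSemidef) : (P⁻¹ - Q⁻¹).PosSemidef := by
  set W := msqrt Q with hWdef
  have hW : W.PosDef := pd_sqrt hQ
  have hWH : (W⁻¹)ᴴ = W⁻¹ := pd_inv_herm hW
  have hWW : W * W = Q := msqrt_mul_self hQ.posSemidef
  set M := W⁻¹ * P * W⁻¹ with hMdef
  have hM : M.PosDef := pd_conj hP hW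
  have hWQW : W⁻¹ * Q * W⁻¹ = 1 := by
    rw [← hWW, ← Matrix.mul_assoc, Matrix.mul_assoc (W⁻¹ * W), pd_inv_mul hW,
      Matrix.one_mul, pd_mul_inv hW]
  have hIM : ((1 : Matrix n n ℂ) - M).PosSemidef := by
    have h2 := psd_conj h hWH
    have h3 : W⁻¹ * (Q - P) * W⁻¹ = 1 - M := by
      rw [Matrix.mul_sub, Matrix.sub_mul, hWQW, hMdef]
    rwa [h3] at h2
  set N := msqrt M with hNdef
  have hN : N.PosDef := pd_sqrt hM
  have hNH : (N⁻¹)ᴴ = N⁻¹ := pd_inv_herm hN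
  have hNN : N * N = M := msqrt_mul_self hM.posSemidef
  have hNinv2 : N⁻¹ * N⁻¹ = M⁻¹ := by rw [← Matrix.mul_inv_rev, hNN]
  have hMinv : (M⁻¹ - 1).PosSemidef := by
    have h2 := psd_conj hIM hNH
    have h3 : N⁻¹ * ((1:Matrix n n ℂ) - M) * N⁻¹ = M⁻¹ - 1 := by
      rw [Matrix.mul_sub, Matrix.sub_mul, Matrix.mul_one, hNinv2, ← hNN,
        ← Matrix.mul_assoc, Matrix.mul_assoc (N⁻¹ * N), pd_inv_mul hN,
        Matrix.one_mul, pd_mul_inv hN]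
    rwa [h3] at h2
  have hMinvEq : M⁻¹ = W * P⁻¹ * W := by
    rw [hMdef, Matrix.mul_inv_rev, Matrix.mul_inv_rev,
      Matrix.nonsing_inv_nonsing_inv _ hW.det_pos.ne'.isUnit, Matrix.mul_assoc]
  have hfinal := psd_conj hMinv hWH
  have h4 : W⁻¹ * (M⁻¹ - 1) * W⁻¹ = P⁻¹ - Q⁻¹ := by
    rw [Matrix.mul_sub, Matrix.sub_mul, Matrix.mul_one, hMinvEq]
    have e1 : W⁻¹ * (W * P⁻¹ * W) * W⁻¹ = P⁻¹ := by
      rw [← Matrix.mul_assoc, ← Matrix.mul_assoc, pd_inv_mul hW, Matrix.one_mul,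
        Matrix.mul_assoc, pd_mul_inv hW, Matrix.mul_one]
    have e2 : W⁻¹ * W⁻¹ = Q⁻¹ := by rw [← Matrix.mul_inv_rev, hWW]
    rw [e1, e2]
  rwa [h4] at hfinal

lemma trace_mul_mono {ρ M N : Matrix n n ℂ} (hρ : ρ.PosSemidef)
    (hMN : (N - M).PosSemidef) : (ρ * M).trace.re ≤ (ρ * N).trace.re := by
  have h := psd_trace_mul_re_nonneg hρ hMN
  have e : ρ * (N - M) = ρ * N - ρ * M := by rw [Matrix.mul_sub]
  rw [e, Matrix.trace_sub, Complex.sub_re] at h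
  linarith

/-- `Tr √·` is monotone w.r.t. the Loewner order. -/
lemma lemC {A B : Matrix n n ℂ} (hA : A.PosSemidef) (hB : B.PosSemidef)
    (h : (B - A).PosSemidef) : sqrtTr A ≤ sqrtTr B := by
  have hcard : (0:ℝ) ≤ (Fintype.card n : ℝ) := Nat.cast_nonneg _
  refine le_of_forall_pos_le_add fun ε hε => ?_
  set γ := ε / ((Fintype.card n : ℝ) + 1) with hγdef
  have hγ : 0 < γ := by positivity
  set T := msqrt B + (γ:ℂ) • 1 with hTdef
  have hT : T.PosDef := Matrix.PosDef.posSemidef_add (msqrt_psd hB) (pd_smul_one hγ)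
  have h1 := lemA hA hT
  have h2 : (A * T⁻¹).trace.re ≤ (B * T⁻¹).trace.re := by
    have hd := psd_trace_mul_re_nonneg h hT.inv.posSemidef
    have e : (B - A) * T⁻¹ = B * T⁻¹ - A * T⁻¹ := by rw [Matrix.sub_mul]
    rw [e, Matrix.trace_sub, Complex.sub_re] at hd
    linarith
  have h3 : (B * T⁻¹).trace.re ≤ sqrtTr B := lemB1 hB hγ
  have h4 : T.trace.re = sqrtTr B + (Fintype.card n : ℝ) * γ := lemB2
  have h5 : (Fintype.card n : ℝ) * γ ≤ ε := by
    rw [hγdef]; exact card_mul_div_le _ _ hcard hε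
  calc sqrtTr A ≤ ((A * T⁻¹).trace.re + T.trace.re) / 2 := h1
    _ ≤ (sqrtTr B + (sqrtTr B + (Fintype.card n : ℝ) * γ)) / 2 := by
        rw [h4]; linarith
    _ = sqrtTr B + (Fintype.card n : ℝ) * γ / 2 := by ring
    _ ≤ sqrtTr B + ε := by linarith

/-- `Tr √·` is subadditive. -/
lemma lemD {A B : Matrix n n ℂ} (hA : A.PosSemidef) (hB : B.PosSemidef) :
    sqrtTr (A + B) ≤ sqrtTr A + sqrtTr B := by
  have hcard : (0:ℝ) ≤ (Fintype.card n : ℝ) := Nat.cast_nonneg _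
  refine le_of_forall_pos_le_add fun ε hε => ?_
  set γ := ε / ((Fintype.card n : ℝ) + 1) with hγdef
  have hγ : 0 < γ := by positivity
  set TA := msqrt A + (γ:ℂ) • 1 with hTAdef
  set TB := msqrt B + (γ:ℂ) • 1 with hTBdef
  have hTA : TA.PosDef := Matrix.PosDef.posSemidef_add (msqrt_psd hA) (pd_smul_one hγ)
  have hTB : TB.PosDef := Matrix.PosDef.posSemidef_add (msqrt_psd hB) (pd_smul_one hγ)
  set T := msqrt A + msqrt B + (γ:ℂ) • 1 with hTdef
  have hT : T.PosDef := Matrix.PosDef.posSemidef_add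
    ((msqrt_psd hA).add (msqrt_psd hB)) (pd_smul_one hγ)
  have hTTA : (T - TA).PosSemidef := by
    have e : T - TA = msqrt B := by rw [hTdef, hTAdef]; abel
    rw [e]; exact msqrt_psd hB
  have hTTB : (T - TB).PosSemidef := by
    have e : T - TB = msqrt A := by rw [hTdef, hTBdef]; abel
    rw [e]; exact msqrt_psd hA
  have hA1 : (A * T⁻¹).trace.re ≤ sqrtTr A :=
    le_trans (trace_mul_mono hA (lemE hTA hT hTTA)) (lemB1 hA hγ)
  have hB1 : (B * T⁻¹).trace.re ≤ sqrtTr B :=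
    le_trans (trace_mul_mono hB (lemE hTB hT hTTB)) (lemB1 hB hγ)
  have h1 := lemA (hA.add hB) hT
  have h2 : ((A + B) * T⁻¹).trace.re = (A * T⁻¹).trace.re + (B * T⁻¹).trace.re := by
    rw [Matrix.add_mul, Matrix.trace_add, Complex.add_re]
  have h3 : T.trace.re = sqrtTr A + sqrtTr B + (Fintype.card n : ℝ) * γ := by
    rw [hTdef, Matrix.trace_add, Matrix.trace_add, Complex.add_re, Complex.add_re,
      Matrix.trace_smul]
    unfold sqrtTr
    simp [Matrix.trace_one, mul_comm]
  have h5 : (Fintype.card n : ℝ) * γ ≤ ε := by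
    rw [hγdef]; exact card_mul_div_le _ _ hcard hε
  rw [h2] at h1
  linarith

end AuxOrder

section AuxSym
set_option linter.unusedSectionVars false
set_option maxHeartbeats 2000000

variable {n : Type*} [Fintype n] [DecidableEq n]

lemma lemF_le (X : Matrix n n ℂ) : sqrtTr (Xᴴ * X) ≤ sqrtTr (X * Xᴴ) := by
  have hXX : (Xᴴ * X).PosSemidef := Matrix.posSemidef_conjTranspose_mul_self X
  have hXXc : (X * Xᴴ).PosSemidef := Matrix.posSemidef_self_mul_conjTranspose X
  have hcard : (0:ℝ) ≤ (Fintype.card n : ℝ) := Nat.cast_nonneg _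
  refine le_of_forall_pos_le_add fun ε hε => ?_
  set γ := ε / ((Fintype.card n : ℝ) + 1) with hγdef
  have hγ : 0 < γ := by positivity
  set T := msqrt (X * Xᴴ) + (γ:ℂ) • 1 with hTdef
  have hT : T.PosDef := Matrix.PosDef.posSemidef_add (msqrt_psd hXXc) (pd_smul_one hγ)
  set R := msqrt T with hRdef
  have hR : R.PosDef := pd_sqrt hT
  have hRH : (R⁻¹)ᴴ = R⁻¹ := pd_inv_herm hR
  have hRR : R * R = T := msqrt_mul_self hT.posSemidef
  have hRinv2 : R⁻¹ * R⁻¹ = T⁻¹ := by rw [← Matrix.mul_inv_rev, hRR]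
  set Y := R⁻¹ * X with hYdef
  have hYc : Yᴴ = Xᴴ * R⁻¹ := by rw [hYdef, Matrix.conjTranspose_mul, hRH]
  have hYY : Yᴴ * Y = Xᴴ * T⁻¹ * X := by
    rw [hYc, hYdef, Matrix.mul_assoc, ← Matrix.mul_assoc R⁻¹, hRinv2, ← Matrix.mul_assoc]
  set T' := Yᴴ * Y + (γ:ℂ) • 1 with hT'def
  have hT' : T'.PosDef := Matrix.PosDef.posSemidef_add
    (Matrix.posSemidef_conjTranspose_mul_self Y) (pd_smul_one hγ)
  -- bound Tr T'
  have htrT' : T'.trace.re ≤ sqrtTr (X * Xᴴ) + (Fintype.card n : ℝ) * γ := by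
    have e1 : (Yᴴ * Y).trace = (X * Xᴴ * T⁻¹).trace := by
      rw [hYY, Matrix.trace_mul_cycle]
    have e2 := lemB1 hXXc hγ
    rw [hT'def, Matrix.trace_add, Complex.add_re, e1, Matrix.trace_smul]
    rw [← hTdef] at e2
    simp only [Matrix.trace_one, smul_eq_mul, Complex.mul_re, Complex.ofReal_re,
      Complex.ofReal_im, Complex.natCast_re]
    simp only [Complex.natCast_im, mul_zero, zero_mul, sub_zero, mul_comm]
    linarith
  -- bound Tr (XᴴX T'⁻¹)
  set K := Y * Yᴴ + (γ:ℂ) • 1 with hKdef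
  have hK : K.PosDef := Matrix.PosDef.posSemidef_add
    (Matrix.posSemidef_self_mul_conjTranspose Y) (pd_smul_one hγ)
  have hpush : Y * T'⁻¹ = K⁻¹ * Y := by
    have h1 : K * Y = Y * T' := by
      rw [hKdef, hT'def, Matrix.add_mul, Matrix.mul_add, Matrix.mul_assoc,
        Matrix.smul_mul, Matrix.mul_smul, Matrix.one_mul, Matrix.mul_one]
    calc Y * T'⁻¹ = K⁻¹ * (K * Y) * T'⁻¹ := by
          rw [← Matrix.mul_assoc, pd_inv_mul hK, Matrix.one_mul]
      _ = K⁻¹ * (Y * T') * T'⁻¹ := by rw [h1]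
      _ = K⁻¹ * Y := by
          rw [Matrix.mul_assoc, Matrix.mul_assoc, pd_mul_inv hT', Matrix.mul_one]
  have hXTY : Xᴴ * X = Yᴴ * T * Y := by
    rw [hYc, hYdef]
    rw [Matrix.mul_assoc, ← Matrix.mul_assoc T, ← hRR]
    rw [Matrix.mul_assoc R, pd_mul_inv hR, Matrix.mul_one]
    rw [← Matrix.mul_assoc, Matrix.mul_assoc (Xᴴ), pd_inv_mul hR, Matrix.mul_one]
  have hmain : (Xᴴ * X * T'⁻¹).trace.re ≤ T.trace.re := by
    have e1 : Xᴴ * X * T'⁻¹ = Yᴴ * (T * (K⁻¹ * Y)) := by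
      rw [hXTY, Matrix.mul_assoc, Matrix.mul_assoc, ← hpush, Matrix.mul_assoc]
    have e2 : (Yᴴ * (T * (K⁻¹ * Y))).trace = (T * (K⁻¹ * (Y * Yᴴ))).trace := by
      rw [Matrix.trace_mul_comm, Matrix.mul_assoc T, Matrix.mul_assoc K⁻¹]
    have e3 : K⁻¹ * (Y * Yᴴ) = 1 - (γ:ℂ) • K⁻¹ := by
      have : Y * Yᴴ = K - (γ:ℂ) • 1 := by rw [hKdef]; abel
      rw [this, Matrix.mul_sub, pd_inv_mul hK, Matrix.mul_smul, Matrix.mul_one]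
    have e4 : (T * (1 - (γ:ℂ) • K⁻¹)).trace = T.trace - (γ:ℂ) * (T * K⁻¹).trace := by
      rw [Matrix.mul_sub, Matrix.mul_one, Matrix.trace_sub, Matrix.mul_smul,
        Matrix.trace_smul, smul_eq_mul]
    have e5 : 0 ≤ (T * K⁻¹).trace.re := psd_trace_mul_re_nonneg hT.posSemidef hK.inv.posSemidef
    rw [e1, e2, e3, e4]
    simp only [Complex.sub_re, Complex.mul_re, Complex.ofReal_re, Complex.ofReal_im]
    nlinarith
  -- combine via lemA
  have h1 := lemA hXX hT'
  have h6 : T.trace.re = sqrtTr (X * Xᴴ) + (Fintype.card n : ℝ) * γ := lemB2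
  have h5 : (Fintype.card n : ℝ) * γ ≤ ε := by
    rw [hγdef]; exact card_mul_div_le _ _ hcard hε
  calc sqrtTr (Xᴴ * X) ≤ ((Xᴴ * X * T'⁻¹).trace.re + T'.trace.re) / 2 := h1
    _ ≤ ((sqrtTr (X * Xᴴ) + (Fintype.card n : ℝ) * γ)
          + (sqrtTr (X * Xᴴ) + (Fintype.card n : ℝ) * γ)) / 2 := by
        rw [← h6]
        have := htrT'
        rw [← h6] at this
        linarith [hmain, this]
    _ = sqrtTr (X * Xᴴ) + (Fintype.card n : ℝ) * γ := by ring
    _ ≤ sqrtTr (X * Xᴴ) + ε := by linarith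

lemma lemF (X : Matrix n n ℂ) : sqrtTr (Xᴴ * X) = sqrtTr (X * Xᴴ) := by
  refine le_antisymm (lemF_le X) ?_
  have := lemF_le Xᴴ
  rwa [Matrix.conjTranspose_conjTranspose] at this

end AuxSym

section AuxG
set_option linter.unusedSectionVars false
set_option maxHeartbeats 2000000

variable {n : Type*} [Fintype n] [DecidableEq n]

/-- `G ρ σ = Tr √(√σ ρ √σ)`, the square root of the fidelity. -/
noncomputable def Gfid (ρ σ : Matrix n n ℂ) : ℝ := sqrtTr (msqrt σ * ρ * msqrt σ)

lemma psd_sandwich {ρ σ : Matrix n n ℂ} (hρ : ρ.PosSemidef) (hσ : σ.PosSemidef) :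
    (msqrt σ * ρ * msqrt σ).PosSemidef := psd_conj hρ (msqrt_herm hσ)

lemma Gfid_nonneg {ρ σ : Matrix n n ℂ} (hρ : ρ.PosSemidef) (hσ : σ.PosSemidef) :
    0 ≤ Gfid ρ σ := sqrtTr_nonneg (psd_sandwich hρ hσ)

lemma traceNorm_eq_sqrtTr (X : Matrix n n ℂ) : traceNorm X = sqrtTr (Xᴴ * X) := by
  unfold traceNorm sqrtTr
  rw [msqrt_of (Matrix.posSemidef_conjTranspose_mul_self X)]

lemma conjTranspose_mul_self_sqrts {ρ σ : Matrix n n ℂ} (hρ : ρ.PosSemidef)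
    (hσ : σ.PosSemidef) :
    (msqrt ρ * msqrt σ)ᴴ * (msqrt ρ * msqrt σ) = msqrt σ * ρ * msqrt σ := by
  rw [Matrix.conjTranspose_mul, msqrt_herm hρ, msqrt_herm hσ]
  rw [Matrix.mul_assoc, ← Matrix.mul_assoc (msqrt ρ), msqrt_mul_self hρ, ← Matrix.mul_assoc]

lemma traceNorm_sqrts_eq_Gfid {ρ σ : Matrix n n ℂ} (hρ : ρ.PosSemidef) (hσ : σ.PosSemidef) :
    traceNorm (msqrt ρ * msqrt σ) = Gfid ρ σ := by
  rw [traceNorm_eq_sqrtTr, conjTranspose_mul_self_sqrts hρ hσ]; rfl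

lemma fidelity_eq_Gfid_sq {ρ σ : Matrix n n ℂ} (hρ : ρ.PosSemidef) (hσ : σ.PosSemidef) :
    fidelity ρ σ = (Gfid ρ σ) ^ 2 := by
  unfold fidelity
  rw [traceNorm_sqrts_eq_Gfid hρ hσ]

lemma sqrt_fidelity {ρ σ : Matrix n n ℂ} (hρ : ρ.PosSemidef) (hσ : σ.PosSemidef) :
    Real.sqrt (fidelity ρ σ) = Gfid ρ σ := by
  rw [fidelity_eq_Gfid_sq hρ hσ, Real.sqrt_sq (Gfid_nonneg hρ hσ)]

lemma Gfid_symm {ρ σ : Matrix n n ℂ} (hρ : ρ.PosSemidef) (hσ : σ.PosSemidef) :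
    Gfid ρ σ = Gfid σ ρ := by
  have h1 := lemF (msqrt ρ * msqrt σ)
  rw [conjTranspose_mul_self_sqrts hρ hσ] at h1
  have h2 : (msqrt ρ * msqrt σ) * (msqrt ρ * msqrt σ)ᴴ = msqrt ρ * σ * msqrt ρ := by
    rw [Matrix.conjTranspose_mul, msqrt_herm hρ, msqrt_herm hσ]
    rw [Matrix.mul_assoc, ← Matrix.mul_assoc (msqrt σ), msqrt_mul_self hσ, ← Matrix.mul_assoc]
  rw [h2] at h1
  exact h1

lemma msqrt_smul {M : Matrix n n ℂ} (hM : M.PosSemidef) {c : ℝ} (hc : 0 ≤ c) :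
    msqrt ((c:ℂ) • M) = ((Real.sqrt c : ℝ) : ℂ) • msqrt M := by
  refine msqrt_eq (psd_smul hM hc) (psd_smul (msqrt_psd hM) (Real.sqrt_nonneg c)) ?_
  rw [Matrix.smul_mul, Matrix.mul_smul, msqrt_mul_self hM, smul_smul]
  norm_cast
  rw [Real.mul_self_sqrt hc]

lemma sqrtTr_smul {M : Matrix n n ℂ} (hM : M.PosSemidef) {c : ℝ} (hc : 0 ≤ c) :
    sqrtTr ((c:ℂ) • M) = Real.sqrt c * sqrtTr M := by
  unfold sqrtTr
  rw [msqrt_smul hM hc, Matrix.trace_smul, smul_eq_mul]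
  simp [Complex.mul_re]

lemma Gfid_mono_right {ρ σ σ' : Matrix n n ℂ} (hρ : ρ.PosSemidef) (hσ : σ.PosSemidef)
    (hσ' : σ'.PosSemidef) (h : (σ' - σ).PosSemidef) : Gfid ρ σ ≤ Gfid ρ σ' := by
  rw [Gfid_symm hρ hσ, Gfid_symm hρ hσ']
  unfold Gfid
  refine lemC (psd_sandwich hσ hρ) (psd_sandwich hσ' hρ) ?_
  have e : msqrt ρ * σ' * msqrt ρ - msqrt ρ * σ * msqrt ρ = msqrt ρ * (σ' - σ) * msqrt ρ := by
    rw [Matrix.mul_sub, Matrix.sub_mul]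
  rw [e]
  exact psd_conj h (msqrt_herm hρ)

/-- easy direction of Alberti's variational formula. -/
lemma lemH {ρ σ T : Matrix n n ℂ} (hρ : ρ.PosSemidef) (hσ : σ.PosSemidef) (hT : T.PosDef) :
    Gfid ρ σ ≤ ((ρ * T⁻¹).trace.re + (σ * T).trace.re) / 2 := by
  have hTtr : 0 ≤ T.trace.re := psd_trace_re_nonneg hT.posSemidef
  refine le_of_forall_pos_le_add fun ε hε => ?_
  set η := 2 * ε / (T.trace.re + 1) with hηdef
  have hη : 0 < η := by positivity
  set W := msqrt (σ + (η:ℂ) • 1) with hWdef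
  have hση : (σ + (η:ℂ) • 1).PosDef := Matrix.PosDef.posSemidef_add hσ (pd_smul_one hη)
  have hW : W.PosDef := pd_sqrt hση
  have hWH : Wᴴ = W := msqrt_herm hση.posSemidef
  have hWW : W * W = σ + (η:ℂ) • 1 := msqrt_mul_self hση.posSemidef
  have hmono : Gfid ρ σ ≤ Gfid ρ (σ + (η:ℂ) • 1) := by
    refine Gfid_mono_right hρ hσ hση.posSemidef ?_
    have e : σ + (η:ℂ) • 1 - σ = (η:ℂ) • 1 := by abel
    rw [e]; exact (pd_smul_one hη).posSemidef
  -- apply lemA with T̃ = W T W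
  set Tt := W * T * W with hTtdef
  have hTt : Tt.PosDef := by
    refine psd_posDef_of_isUnit (psd_conj hT.posSemidef hWH) ?_
    exact (hW.isUnit.mul hT.isUnit).mul hW.isUnit
  have h1 := lemA (psd_sandwich hρ hση.posSemidef) hTt
  have hTtinv : Tt⁻¹ = W⁻¹ * T⁻¹ * W⁻¹ := by
    rw [hTtdef, Matrix.mul_inv_rev, Matrix.mul_inv_rev, Matrix.mul_assoc]
  have e1 : (W * ρ * W * Tt⁻¹).trace = (ρ * T⁻¹).trace := by
    rw [hTtinv]
    have : W * ρ * W * (W⁻¹ * T⁻¹ * W⁻¹) = W * (ρ * T⁻¹) * W⁻¹ := by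
      simp only [Matrix.mul_assoc]
      rw [Matrix.mul_nonsing_inv_cancel_left _ _ hW.det_pos.ne'.isUnit]
    rw [this, Matrix.trace_mul_cycle, ← Matrix.mul_assoc, pd_inv_mul hW, Matrix.one_mul]
  have e2 : Tt.trace = (σ * T).trace + (η:ℂ) * T.trace := by
    rw [hTtdef, Matrix.trace_mul_cycle, hWW]
    rw [Matrix.add_mul, Matrix.trace_add, Matrix.smul_mul, Matrix.one_mul, Matrix.trace_smul,
      smul_eq_mul]
  have hGW : Gfid ρ (σ + (η:ℂ) • 1) = sqrtTr (W * ρ * W) := rfl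
  rw [hGW] at hmono
  have hbound : sqrtTr (W * ρ * W) ≤ ((ρ * T⁻¹).trace.re + (σ * T).trace.re + η * T.trace.re)/2 := by
    calc sqrtTr (W * ρ * W) ≤ ((W * ρ * W * Tt⁻¹).trace.re + Tt.trace.re) / 2 := h1
      _ = ((ρ * T⁻¹).trace.re + ((σ * T).trace.re + η * T.trace.re)) / 2 := by
          rw [e1, e2]
          simp [Complex.add_re, Complex.mul_re]
      _ = ((ρ * T⁻¹).trace.re + (σ * T).trace.re + η * T.trace.re)/2 := by ring
  have hfin : η * T.trace.re ≤ 2 * ε := by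
    rw [hηdef]
    rw [div_mul_eq_mul_div]
    rw [div_le_iff₀ (by positivity)]
    nlinarith
  calc Gfid ρ σ ≤ ((ρ * T⁻¹).trace.re + (σ * T).trace.re + η * T.trace.re)/2 :=
        le_trans hmono hbound
    _ ≤ ((ρ * T⁻¹).trace.re + (σ * T).trace.re + 2 * ε)/2 := by linarith
    _ = ((ρ * T⁻¹).trace.re + (σ * T).trace.re)/2 + ε := by ring

end AuxG

section AuxSuper
set_option linter.unusedSectionVars false
set_option maxHeartbeats 2000000

variable {n : Type*} [Fintype n] [DecidableEq n]

lemma psd_sum {ι : Type*} (s : Finset ι) (f : ι → Matrix n n ℂ)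
    (h : ∀ i ∈ s, (f i).PosSemidef) : (∑ i ∈ s, f i).PosSemidef := by
  exact Finset.sum_induction f (fun m => m.PosSemidef)
    (fun _ _ hx hy => hx.add hy) Matrix.PosSemidef.zero h

/-- Strong superadditivity of the root fidelity. -/
lemma Gfid_superadd {ι : Type*} [Fintype ι] (a b : ι → Matrix n n ℂ)
    (ha : ∀ i, (a i).PosSemidef) (hb : ∀ i, (b i).PosSemidef) :
    ∑ i, Gfid (a i) (b i) ≤ Gfid (∑ i, a i) (∑ i, b i) := by
  classical
  set ρ' := ∑ i, a i with hρ'def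
  set σ' := ∑ i, b i with hσ'def
  have hρ' : ρ'.PosSemidef := psd_sum _ _ fun i _ => ha i
  have hσ' : σ'.PosSemidef := psd_sum _ _ fun i _ => hb i
  have hcard : (0:ℝ) ≤ (Fintype.card n : ℝ) := Nat.cast_nonneg _
  set s := sqrtTr ρ' with hsdef
  have hs : 0 ≤ s := sqrtTr_nonneg hρ'
  refine le_of_forall_pos_le_add fun ε hε => ?_
  set γ := min ((ε / (2 * (s + 1)))^2) (ε / ((Fintype.card n : ℝ) + 1)) with hγdef
  have hγ : 0 < γ := lt_min (by positivity) (by positivity)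
  have hγ1 : Real.sqrt γ * s ≤ ε / 2 := by
    have h1 : Real.sqrt γ ≤ ε / (2 * (s + 1)) := by
      calc Real.sqrt γ ≤ Real.sqrt ((ε / (2 * (s + 1)))^2) :=
            Real.sqrt_le_sqrt (min_le_left _ _)
        _ = ε / (2 * (s + 1)) := Real.sqrt_sq (by positivity)
    calc Real.sqrt γ * s ≤ (ε / (2 * (s + 1))) * s :=
          mul_le_mul_of_nonneg_right h1 hs
      _ ≤ ε / 2 := by
          rw [div_mul_eq_mul_div, div_le_div_iff₀ (by positivity) (by positivity)]
          nlinarith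
  have hγ2 : (Fintype.card n : ℝ) * γ / 2 ≤ ε / 2 := by
    have h1 : γ ≤ ε / ((Fintype.card n : ℝ) + 1) := min_le_right _ _
    have := card_mul_div_le (Fintype.card n : ℝ) ε hcard hε
    have h2 : (Fintype.card n : ℝ) * γ ≤ ε := by
      calc (Fintype.card n : ℝ) * γ ≤ (Fintype.card n : ℝ) * (ε / ((Fintype.card n : ℝ) + 1)) :=
            mul_le_mul_of_nonneg_left h1 hcard
        _ ≤ ε := this
    linarith
  -- the near-optimal T
  set W := msqrt (σ' + (γ:ℂ) • 1) with hWdef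
  have hσγ : (σ' + (γ:ℂ) • 1).PosDef := Matrix.PosDef.posSemidef_add hσ' (pd_smul_one hγ)
  have hW : W.PosDef := pd_sqrt hσγ
  have hWH : Wᴴ = W := msqrt_herm hσγ.posSemidef
  have hWW : W * W = σ' + (γ:ℂ) • 1 := msqrt_mul_self hσγ.posSemidef
  set H := W * ρ' * W with hHdef
  have hH : H.PosSemidef := psd_conj hρ' hWH
  set M := msqrt H with hMdef
  have hMγ : (M + (γ:ℂ) • 1).PosDef := Matrix.PosDef.posSemidef_add (msqrt_psd hH) (pd_smul_one hγ)
  set T := W⁻¹ * (M + (γ:ℂ) • 1) * W⁻¹ with hTdef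
  have hT : T.PosDef := pd_conj hMγ hW
  -- per-component bound and summation
  have hsum : ∑ i, Gfid (a i) (b i) ≤ ((ρ' * T⁻¹).trace.re + (σ' * T).trace.re) / 2 := by
    have h1 : ∀ i, Gfid (a i) (b i) ≤ ((a i * T⁻¹).trace.re + (b i * T).trace.re) / 2 :=
      fun i => lemH (ha i) (hb i) hT
    calc ∑ i, Gfid (a i) (b i)
        ≤ ∑ i, ((a i * T⁻¹).trace.re + (b i * T).trace.re) / 2 :=
          Finset.sum_le_sum fun i _ => h1 i
      _ = ((ρ' * T⁻¹).trace.re + (σ' * T).trace.re) / 2 := by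
          rw [hρ'def, hσ'def, Matrix.sum_mul, Matrix.sum_mul, Matrix.trace_sum,
            Matrix.trace_sum, Complex.re_sum, Complex.re_sum, ← Finset.sum_add_distrib,
            Finset.sum_div]
  -- bound Tr(ρ' T⁻¹)
  have hTinv : T⁻¹ = W * (M + (γ:ℂ) • 1)⁻¹ * W := by
    rw [hTdef, Matrix.mul_inv_rev, Matrix.mul_inv_rev,
      Matrix.nonsing_inv_nonsing_inv _ hW.det_pos.ne'.isUnit, Matrix.mul_assoc]
  have hb1 : (ρ' * T⁻¹).trace.re ≤ sqrtTr H := by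
    have e1 : (ρ' * T⁻¹).trace = (H * (M + (γ:ℂ) • 1)⁻¹).trace := by
      rw [hTinv, hHdef]
      rw [← Matrix.mul_assoc, ← Matrix.mul_assoc]
      rw [Matrix.trace_mul_cycle]
      simp only [Matrix.mul_assoc]
    rw [e1]
    exact lemB1 hH hγ
  -- bound Tr(σ' T)
  have hb2 : (σ' * T).trace.re ≤ sqrtTr H + (Fintype.card n : ℝ) * γ := by
    have e1 : (σ' + (γ:ℂ) • 1) * T = W * (M + (γ:ℂ) • 1) * W⁻¹ := by
      rw [← hWW, hTdef]
      simp only [Matrix.mul_assoc]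
      rw [Matrix.mul_nonsing_inv_cancel_left _ _ hW.det_pos.ne'.isUnit]
    have e2 : ((σ' + (γ:ℂ) • 1) * T).trace = (M + (γ:ℂ) • 1).trace := by
      rw [e1, Matrix.trace_mul_cycle, pd_inv_mul hW, Matrix.one_mul]
    have e3 : ((σ' + (γ:ℂ) • 1) * T).trace = (σ' * T).trace + (γ:ℂ) * T.trace := by
      rw [Matrix.add_mul, Matrix.trace_add, Matrix.smul_mul, Matrix.one_mul, Matrix.trace_smul,
        smul_eq_mul]
    have e4 : (M + (γ:ℂ) • 1).trace.re = sqrtTr H + (Fintype.card n : ℝ) * γ := lemB2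
    have e5 : 0 ≤ T.trace.re := psd_trace_re_nonneg hT.posSemidef
    have e6 := congrArg Complex.re (e3.symm.trans e2)
    simp only [Complex.add_re, Complex.mul_re, Complex.ofReal_re, Complex.ofReal_im] at e6
    rw [e4] at e6
    nlinarith
  -- bound sqrtTr H by Gfid ρ' σ'
  have hb3 : sqrtTr H ≤ Gfid ρ' σ' + Real.sqrt γ * s := by
    set X := msqrt ρ' * W with hXdef
    have hXc : Xᴴ = W * msqrt ρ' := by
      rw [hXdef, Matrix.conjTranspose_mul, hWH, msqrt_herm hρ']
    have e1 : Xᴴ * X = H := by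
      rw [hXc, hXdef, hHdef, Matrix.mul_assoc, ← Matrix.mul_assoc (msqrt ρ'),
        msqrt_mul_self hρ', ← Matrix.mul_assoc]
    have e2 : X * Xᴴ = msqrt ρ' * σ' * msqrt ρ' + (γ:ℂ) • ρ' := by
      rw [hXdef, hXc, Matrix.mul_assoc, ← Matrix.mul_assoc W W, hWW]
      rw [Matrix.add_mul, Matrix.mul_add, Matrix.smul_mul, Matrix.mul_smul,
        Matrix.one_mul, ← Matrix.mul_assoc, msqrt_mul_self hρ']
    have e3 := lemF X
    rw [e1, e2] at e3
    have e4 : sqrtTr (msqrt ρ' * σ' * msqrt ρ' + (γ:ℂ) • ρ')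
        ≤ sqrtTr (msqrt ρ' * σ' * msqrt ρ') + sqrtTr ((γ:ℂ) • ρ') :=
      lemD (psd_conj hσ' (msqrt_herm hρ')) (psd_smul hρ' hγ.le)
    have e5 : sqrtTr ((γ:ℂ) • ρ') = Real.sqrt γ * s := by
      rw [sqrtTr_smul hρ' hγ.le, hsdef]
    have e6 : sqrtTr (msqrt ρ' * σ' * msqrt ρ') = Gfid ρ' σ' := by
      rw [show sqrtTr (msqrt ρ' * σ' * msqrt ρ') = Gfid σ' ρ' from rfl]
      exact (Gfid_symm hρ' hσ').symm
    rw [e3]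
    rw [← e5, ← e6]
    exact e4
  calc ∑ i, Gfid (a i) (b i) ≤ ((ρ' * T⁻¹).trace.re + (σ' * T).trace.re) / 2 := hsum
    _ ≤ (sqrtTr H + (sqrtTr H + (Fintype.card n : ℝ) * γ)) / 2 := by linarith
    _ = sqrtTr H + (Fintype.card n : ℝ) * γ / 2 := by ring
    _ ≤ (Gfid ρ' σ' + Real.sqrt γ * s) + (Fintype.card n : ℝ) * γ / 2 := by linarith
    _ ≤ Gfid ρ' σ' + ε := by
        have := hγ1
        have := hγ2
        rw [mul_div_assoc] at hγ2 ⊢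
        linarith

end AuxSuper

section AuxTrace
set_option linter.unusedSectionVars false
set_option maxHeartbeats 2000000

variable {n : Type*} [Fintype n] [DecidableEq n]

/-- `M ≤ (Tr M) • 1` for `M` PSD. -/
lemma lemI {M : Matrix n n ℂ} (hM : M.PosSemidef) :
    (((M.trace.re : ℝ) : ℂ) • 1 - M).PosSemidef := by
  have hH := hM.1
  set V : Matrix n n ℂ := (hH.eigenvectorUnitary : Matrix n n ℂ) with hVdef
  have hspec : M = V * Matrix.diagonal (RCLike.ofReal ∘ hH.eigenvalues) * star V :=
    hH.spectral_theorem
  have hV1 : V * star V = 1 := (Matrix.mem_unitaryGroup_iff).mp hH.eigenvectorUnitary.2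
  have hV2 : star V * V = 1 := (Matrix.mem_unitaryGroup_iff').mp hH.eigenvectorUnitary.2
  have htr : M.trace = ∑ i, ((hH.eigenvalues i : ℝ) : ℂ) := by
    have htr' := congrArg Matrix.trace hspec
    rw [Matrix.trace_mul_cycle, hV2, Matrix.one_mul, Matrix.trace_diagonal] at htr'
    exact htr'
  have htrre : M.trace.re = ∑ i, hH.eigenvalues i := by
    rw [htr, Complex.re_sum]
    simp
  have hc : ∀ i, hH.eigenvalues i ≤ M.trace.re := by
    intro i
    rw [htrre]
    exact Finset.single_le_sum (fun j _ => hM.eigenvalues_nonneg j) (Finset.mem_univ i)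
  set X : Matrix n n ℂ := Matrix.diagonal (fun i => ((M.trace.re - hH.eigenvalues i : ℝ) : ℂ))
    with hXdef
  have hX : X.PosSemidef := by
    refine Matrix.PosSemidef.diagonal fun i => ?_
    simp only [Pi.zero_apply]
    rw [← Complex.ofReal_zero, Complex.real_le_real]
    linarith [hc i]
  have h1 : ((M.trace.re : ℝ) : ℂ) • (1 : Matrix n n ℂ)
      = Matrix.diagonal (fun _ => ((M.trace.re : ℝ) : ℂ)) := by
    ext i j
    by_cases h : i = j <;>
      simp [Matrix.diagonal_apply, Matrix.one_apply, h]
  have hXeq : X = ((M.trace.re : ℝ) : ℂ) • 1 - Matrix.diagonal (RCLike.ofReal ∘ hH.eigenvalues) := by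
    rw [hXdef, h1, Matrix.diagonal_sub]
    congr 1
    funext i
    push_cast
    rfl
  have key : ((M.trace.re : ℝ) : ℂ) • 1 - M = V * X * star V := by
    rw [hXeq, Matrix.mul_sub, Matrix.sub_mul, ← hspec]
    congr 1
    rw [Matrix.mul_smul, Matrix.smul_mul, Matrix.mul_one, hV1]
  rw [key]
  have := hX.mul_mul_conjTranspose_same V
  rwa [← Matrix.star_eq_conjTranspose] at this

/-- feasible σ gives a trace lower bound. -/
lemma feas_trace_lb {A B : Type*} [Fintype A] [Fintype B] [DecidableEq A] [DecidableEq B]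
    {ρ' : Matrix (A × B) (A × B) ℂ} {σ : Matrix B B ℂ}
    (hfeas : ((1 : Matrix A A ℂ) ⊗ₖ σ - ρ').PosSemidef) :
    ρ'.trace.re ≤ (Fintype.card A : ℝ) * σ.trace.re := by
  have h := psd_trace_re_nonneg hfeas
  rw [Matrix.trace_sub, Complex.sub_re] at h
  have e : ((1 : Matrix A A ℂ) ⊗ₖ σ).trace = (Fintype.card A : ℂ) * σ.trace := by
    rw [Matrix.trace_kronecker, Matrix.trace_one]
  rw [e] at h
  have : ((Fintype.card A : ℂ) * σ.trace).re = (Fintype.card A : ℝ) * σ.trace.re := by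
    simp [Complex.mul_re]
  linarith [h, this.symm.le, this.le]

/-- the scalar matrix `Tr ρ' • 1` is feasible. -/
lemma feas_exists {A B : Type*} [Fintype A] [Fintype B] [DecidableEq A] [DecidableEq B]
    {ρ' : Matrix (A × B) (A × B) ℂ} (hρ' : ρ'.PosSemidef) :
    ∃ σ : Matrix B B ℂ, σ.PosSemidef ∧ ((1 : Matrix A A ℂ) ⊗ₖ σ - ρ').PosSemidef ∧
      σ.trace.re = (Fintype.card B : ℝ) * ρ'.trace.re := by
  refine ⟨((ρ'.trace.re : ℝ) : ℂ) • 1, psd_smul Matrix.PosSemidef.one (psd_trace_re_nonneg hρ'), ?_, ?_⟩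
  · have e : (1 : Matrix A A ℂ) ⊗ₖ (((ρ'.trace.re : ℝ) : ℂ) • (1 : Matrix B B ℂ))
        = ((ρ'.trace.re : ℝ) : ℂ) • (1 : Matrix (A × B) (A × B) ℂ) := by
      rw [Matrix.kronecker_smul, Matrix.one_kronecker_one]
    rw [e]
    exact lemI hρ'
  · rw [Matrix.trace_smul, Matrix.trace_one]
    simp [mul_comm]

end AuxTrace

section AuxFid
set_option linter.unusedSectionVars false
set_option maxHeartbeats 2000000

variable {n : Type*} [Fintype n] [DecidableEq n]

lemma fidelity_nonneg (ρ σ : Matrix n n ℂ) : 0 ≤ fidelity ρ σ := sq_nonneg _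

lemma gfid_eq_fid {x y : Matrix n n ℂ} (hy : y.trace.re = 1) :
    gFidelity x y = fidelity x y := by
  unfold gFidelity
  rw [hy]
  rw [show (1:ℝ) - 1 = 0 by ring, mul_zero, Real.sqrt_zero, add_zero,
    Real.sq_sqrt (fidelity_nonneg x y)]

lemma purifiedDist_le_one (x y : Matrix n n ℂ) : purifiedDist x y ≤ 1 := by
  unfold purifiedDist
  have h : 1 - gFidelity x y ≤ 1 := by
    have : 0 ≤ gFidelity x y := sq_nonneg _
    linarith
  calc Real.sqrt (1 - gFidelity x y) ≤ Real.sqrt 1 := Real.sqrt_le_sqrt h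
    _ = 1 := Real.sqrt_one

lemma fid_self {ρ : Matrix n n ℂ} (hρ : ρ.PosSemidef) :
    fidelity ρ ρ = (ρ.trace.re)^2 := by
  unfold fidelity
  rw [msqrt_mul_self hρ, traceNorm_eq_sqrtTr]
  have hsq : (ρ * ρ).PosSemidef := by
    have : ρ * ρ = ρᴴ * ρ := by rw [hρ.1]
    rw [this]
    exact Matrix.posSemidef_conjTranspose_mul_self ρ
  have e : sqrtTr (ρᴴ * ρ) = ρ.trace.re := by
    unfold sqrtTr
    rw [hρ.1, msqrt_eq hsq hρ rfl]
  rw [e]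

lemma purifiedDist_self_zero {ρ : Matrix n n ℂ} (hρ : ρ.PosSemidef)
    (h1 : ρ.trace.re = 1) : purifiedDist ρ ρ = 0 := by
  unfold purifiedDist
  rw [gfid_eq_fid h1, fid_self hρ, h1]
  norm_num

lemma fid_le_trace {ρ' ρ : Matrix n n ℂ} (hρ' : ρ'.PosSemidef) (hρ : ρ.PosSemidef)
    (h1 : ρ.trace.re = 1) : fidelity ρ' ρ ≤ ρ'.trace.re := by
  set a := ρ'.trace.re with hadef
  have ha : 0 ≤ a := psd_trace_re_nonneg hρ'
  set G := Gfid ρ' ρ with hGdef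
  have hG : 0 ≤ G := Gfid_nonneg hρ' hρ
  have key : ∀ t : ℝ, 0 < t → G ≤ (a / t + t) / 2 := by
    intro t ht
    have hT : (((t:ℝ):ℂ) • (1 : Matrix n n ℂ)).PosDef := pd_smul_one ht
    have h2 := lemH hρ' hρ hT
    have hTinv : (((t:ℝ):ℂ) • (1 : Matrix n n ℂ))⁻¹ = (((t⁻¹:ℝ):ℂ) • (1 : Matrix n n ℂ)) := by
      refine Matrix.inv_eq_right_inv ?_
      rw [Matrix.smul_mul, Matrix.mul_smul, Matrix.one_mul, smul_smul]
      norm_cast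
      rw [mul_inv_cancel₀ ht.ne']
      simp
    have e1 : (ρ' * (((t:ℝ):ℂ) • (1 : Matrix n n ℂ))⁻¹).trace.re = a / t := by
      rw [hTinv, Matrix.mul_smul, Matrix.mul_one, Matrix.trace_smul, smul_eq_mul,
        Complex.re_ofReal_mul, div_eq_inv_mul, hadef]
    have e2 : (ρ * (((t:ℝ):ℂ) • (1 : Matrix n n ℂ))).trace.re = t := by
      rw [Matrix.mul_smul, Matrix.mul_one, Matrix.trace_smul, smul_eq_mul,
        Complex.re_ofReal_mul, h1, mul_one]
    rw [e1, e2] at h2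
    exact h2
  have hfid : fidelity ρ' ρ = G^2 := fidelity_eq_Gfid_sq hρ' hρ
  rcases eq_or_lt_of_le ha with ha0 | hapos
  · have hG0 : G ≤ 0 := by
      refine le_of_forall_pos_le_add fun ε hε => ?_
      have := key ε hε
      rw [← ha0] at this
      rw [zero_div] at this
      linarith
    have : G = 0 := le_antisymm hG0 hG
    rw [hfid, this]
    simpa using ha
  · have hs := key (Real.sqrt a) (Real.sqrt_pos.mpr hapos)
    rw [Real.div_sqrt] at hs
    have hGa : G ≤ Real.sqrt a := by linarith
    calc fidelity ρ' ρ = G^2 := hfid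
      _ ≤ (Real.sqrt a)^2 := by exact pow_le_pow_left₀ hG hGa 2
      _ = a := Real.sq_sqrt ha

lemma smooth_trace_lb {ρ' ρ : Matrix n n ℂ} {ε : ℝ} (hρ' : ρ'.PosSemidef)
    (hρ : ρ.PosSemidef) (h1 : ρ.trace.re = 1) (hP : purifiedDist ρ' ρ ≤ ε) :
    1 - ε^2 ≤ ρ'.trace.re := by
  have hF : 1 - ε^2 ≤ fidelity ρ' ρ := by
    unfold purifiedDist at hP
    rw [gfid_eq_fid h1] at hP
    rcases le_or_gt (1 - fidelity ρ' ρ) 0 with h | h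
    · nlinarith [sq_nonneg ε]
    · have h2 : 1 - fidelity ρ' ρ ≤ ε^2 := by
        have := Real.sq_sqrt h.le
        nlinarith [Real.sqrt_nonneg (1 - fidelity ρ' ρ)]
      linarith
  linarith [fid_le_trace hρ' hρ h1]

lemma Gfid_smul {ρ σ : Matrix n n ℂ} (hρ : ρ.PosSemidef) (hσ : σ.PosSemidef)
    {c : ℝ} (hc : 0 ≤ c) :
    Gfid ((c:ℂ) • ρ) ((c:ℂ) • σ) = c * Gfid ρ σ := by
  unfold Gfid
  rw [msqrt_smul hσ hc]
  have e : ((Real.sqrt c : ℝ):ℂ) • msqrt σ * ((c:ℂ) • ρ) * (((Real.sqrt c : ℝ):ℂ) • msqrt σ)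
      = (((c^2 : ℝ)):ℂ) • (msqrt σ * ρ * msqrt σ) := by
    rw [Matrix.smul_mul, Matrix.mul_smul, Matrix.smul_mul, Matrix.mul_smul, Matrix.smul_mul,
      smul_smul, smul_smul]
    congr 1
    push_cast
    rw [← Complex.ofReal_mul, ← Complex.ofReal_mul, Real.mul_self_sqrt hc]
    push_cast
    ring
  rw [e, sqrtTr_smul (psd_conj hρ (msqrt_herm hσ)) (sq_nonneg c), Real.sqrt_sq hc]

end AuxFid

section AuxHmin
set_option linter.unusedSectionVars false
set_option maxHeartbeats 2000000

variable {A B : Type*} [Fintype A] [Fintype B] [DecidableEq A] [DecidableEq B]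

/-- The feasible-trace set appearing in `Hmin`. -/
def FeasSet (ρ' : Matrix (A × B) (A × B) ℂ) : Set ℝ :=
  {t : ℝ | ∃ σ : Matrix B B ℂ, σ.PosSemidef ∧
      ((1 : Matrix A A ℂ) ⊗ₖ σ - ρ').PosSemidef ∧ t = σ.trace.re}

lemma Hmin_eq (ρ' : Matrix (A × B) (A × B) ℂ) :
    Hmin ρ' = - Real.logb 2 (sInf (FeasSet ρ')) := rfl

lemma FeasSet_nonempty {ρ' : Matrix (A × B) (A × B) ℂ} (hρ' : ρ'.PosSemidef) :
    (FeasSet ρ').Nonempty := by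
  obtain ⟨σ, h1, h2, h3⟩ := feas_exists hρ'
  exact ⟨σ.trace.re, σ, h1, h2, rfl⟩

lemma FeasSet_bddBelow (ρ' : Matrix (A × B) (A × B) ℂ) : BddBelow (FeasSet ρ') := by
  refine ⟨0, fun t ht => ?_⟩
  obtain ⟨σ, h1, _, h3⟩ := ht
  rw [h3]
  exact psd_trace_re_nonneg h1

lemma FeasSet_lb [Nonempty A] {ρ' : Matrix (A × B) (A × B) ℂ} :
    ∀ t ∈ FeasSet ρ', ρ'.trace.re / (Fintype.card A : ℝ) ≤ t := by
  intro t ht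
  obtain ⟨σ, _, h2, h3⟩ := ht
  rw [h3]
  have hcard : (0:ℝ) < (Fintype.card A : ℝ) := by
    exact_mod_cast Fintype.card_pos
  rw [div_le_iff₀ hcard, mul_comm]
  exact feas_trace_lb h2

lemma sInf_feas_lb [Nonempty A] {ρ' : Matrix (A × B) (A × B) ℂ} (hρ' : ρ'.PosSemidef) :
    ρ'.trace.re / (Fintype.card A : ℝ) ≤ sInf (FeasSet ρ') :=
  le_csInf (FeasSet_nonempty hρ') FeasSet_lb

lemma sInf_feas_pos [Nonempty A] {ρ' : Matrix (A × B) (A × B) ℂ} (hρ' : ρ'.PosSemidef)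
    (h : 0 < ρ'.trace.re) : 0 < sInf (FeasSet ρ') := by
  have hcard : (0:ℝ) < (Fintype.card A : ℝ) := by exact_mod_cast Fintype.card_pos
  exact lt_of_lt_of_le (by positivity) (sInf_feas_lb hρ')

lemma Hmin_ge [Nonempty A] {ρ' : Matrix (A × B) (A × B) ℂ} (hρ' : ρ'.PosSemidef)
    (hpos : 0 < ρ'.trace.re) {σ : Matrix B B ℂ} {y : ℝ} (hσ : σ.PosSemidef)
    (hfeas : ((1 : Matrix A A ℂ) ⊗ₖ σ - ρ').PosSemidef)
    (hle : σ.trace.re ≤ (2:ℝ) ^ (-y : ℝ)) : y ≤ Hmin ρ' := by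
  have hmem : σ.trace.re ∈ FeasSet ρ' := ⟨σ, hσ, hfeas, rfl⟩
  have h1 : sInf (FeasSet ρ') ≤ (2:ℝ) ^ (-y : ℝ) :=
    le_trans (csInf_le (FeasSet_bddBelow ρ') hmem) hle
  have h2 : 0 < sInf (FeasSet ρ') := sInf_feas_pos hρ' hpos
  have h3 : Real.logb 2 (sInf (FeasSet ρ')) ≤ -y := by
    calc Real.logb 2 (sInf (FeasSet ρ')) ≤ Real.logb 2 ((2:ℝ) ^ (-y : ℝ)) :=
          Real.logb_le_logb_of_le (by norm_num) h2 h1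
      _ = -y := Real.logb_rpow (by norm_num) (by norm_num)
  rw [Hmin_eq]
  linarith
lemma Hmin_le [Nonempty A] {ρ' : Matrix (A × B) (A × B) ℂ} (hρ' : ρ'.PosSemidef)
    {c : ℝ} (hc : 0 < c) (hle : c ≤ ρ'.trace.re) :
    Hmin ρ' ≤ - Real.logb 2 (c / (Fintype.card A : ℝ)) := by
  have hcard : (0:ℝ) < (Fintype.card A : ℝ) := by exact_mod_cast Fintype.card_pos
  have h1 : c / (Fintype.card A : ℝ) ≤ sInf (FeasSet ρ') :=
    le_trans (by gcongr) (sInf_feas_lb hρ')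
  have h2 : Real.logb 2 (c / (Fintype.card A : ℝ)) ≤ Real.logb 2 (sInf (FeasSet ρ')) :=
    Real.logb_le_logb_of_le (by norm_num) (by positivity) h1
  rw [Hmin_eq]
  linarith

lemma kron_sum {ι : Type*} [Fintype ι] (c : ι → ℝ) (σ : ι → Matrix B B ℂ) :
    (1 : Matrix A A ℂ) ⊗ₖ (∑ i, ((c i : ℝ) : ℂ) • σ i)
      = ∑ i, ((c i : ℝ) : ℂ) • ((1 : Matrix A A ℂ) ⊗ₖ σ i) := by
  ext ⟨a, b⟩ ⟨a', b'⟩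
  simp only [Matrix.kroneckerMap_apply, Matrix.sum_apply, Matrix.smul_apply,
    smul_eq_mul, Finset.mul_sum]
  refine Finset.sum_congr rfl fun i _ => ?_
  ring

lemma trace_re_sum_smul {ι : Type*} [Fintype ι] {n : Type*} [Fintype n]
    (c : ι → ℝ) (M : ι → Matrix n n ℂ) :
    (∑ i, ((c i : ℝ) : ℂ) • M i).trace.re = ∑ i, c i * (M i).trace.re := by
  rw [Matrix.trace_sum, Complex.re_sum]
  refine Finset.sum_congr rfl fun i _ => ?_
  rw [Matrix.trace_smul, smul_eq_mul, Complex.re_ofReal_mul]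

end AuxHmin

set_option maxHeartbeats 4000000 in
/-- The smooth conditional min-entropy of a convex combination is at least the minimum over
the components. -/
theorem HminSmooth_mixture {A B ι : Type*} [Fintype A] [Fintype B] [Fintype ι]
    [DecidableEq A] [DecidableEq B] [Nonempty ι]
    (ρ : ι → Matrix (A × B) (A × B) ℂ) (p : ι → ℝ)
    (hp : ∀ i, 0 ≤ p i) (hp1 : ∑ i, p i = 1)
    (hρ : ∀ i, (ρ i).PosSemidef) (hρ1 : ∀ i, (ρ i).trace = 1)
    (ε : ℝ) (hε : 0 ≤ ε) :
    (Finset.univ.inf' Finset.univ_nonempty fun i => HminSmooth ε (ρ i)) ≤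
      HminSmooth ε (∑ i, (p i : ℂ) • ρ i) := by
  classical
  have i₀ : ι := Classical.arbitrary ι
  -- A and B are nonempty
  have hABne : Nonempty (A × B) := by
    by_contra h
    rw [not_nonempty_iff] at h
    have h0 : (ρ i₀).trace = 0 := by
      rw [Matrix.trace]
      exact Finset.sum_of_isEmpty _
    rw [hρ1 i₀] at h0
    exact one_ne_zero h0
  have hA : Nonempty A := ⟨(Classical.arbitrary (A × B)).1⟩
  have hB : Nonempty B := ⟨(Classical.arbitrary (A × B)).2⟩
  have hcardA : (0:ℝ) < (Fintype.card A : ℝ) := by exact_mod_cast Fintype.card_pos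
  have hcardB : (0:ℝ) < (Fintype.card B : ℝ) := by exact_mod_cast Fintype.card_pos
  set ρbar := ∑ i, (p i : ℂ) • ρ i with hρbardef
  have hρbar : ρbar.PosSemidef := psd_sum _ _ fun i _ => psd_smul (hρ i) (hp i)
  have hρbartr : ρbar.trace.re = 1 := by
    rw [hρbardef, trace_re_sum_smul]
    have : ∀ i ∈ Finset.univ, p i * (ρ i).trace.re = p i := by
      intro i _
      rw [hρ1 i]
      simp
    rw [Finset.sum_congr rfl this, hp1]
  set m := Finset.univ.inf' Finset.univ_nonempty fun i => HminSmooth ε (ρ i) with hmdef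
  rcases le_or_gt 1 ε with hε1 | hε1
  · -- ε ≥ 1 : both sides degenerate to 0
    have hzero : ∀ M : Matrix (A × B) (A × B) ℂ, HminSmooth ε M = 0 := by
      intro M
      unfold HminSmooth
      apply Real.sSup_of_not_bddAbove
      rintro ⟨u, hu⟩
      set x := max u 0 + 1 with hxdef
      have hxu : u < x := by
        have := le_max_left u 0
        rw [hxdef]; linarith
      set c := min ((2:ℝ) ^ (-x : ℝ) / (Fintype.card B : ℝ))
        (1 / ((Fintype.card A : ℝ) * (Fintype.card B : ℝ))) with hcdef
      have hc : 0 < c := lt_min (by positivity) (by positivity)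
      set ρ' : Matrix (A × B) (A × B) ℂ := ((c:ℝ):ℂ) • 1 with hρ'def
      have hρ'psd : ρ'.PosSemidef := psd_smul Matrix.PosSemidef.one hc.le
      have hρ'tr : ρ'.trace.re = c * ((Fintype.card A : ℝ) * (Fintype.card B : ℝ)) := by
        rw [hρ'def, Matrix.trace_smul, smul_eq_mul, Complex.re_ofReal_mul, Matrix.trace_one]
        simp [Fintype.card_prod]
      have htr1 : ρ'.trace.re ≤ 1 := by
        rw [hρ'tr]
        have h1 : c ≤ 1 / ((Fintype.card A : ℝ) * (Fintype.card B : ℝ)) := min_le_right _ _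
        rw [le_div_iff₀ (by positivity)] at h1
        exact h1
      -- feasibility of c • 1 on B
      have hσfeas : ((1 : Matrix A A ℂ) ⊗ₖ (((c:ℝ):ℂ) • (1 : Matrix B B ℂ)) - ρ').PosSemidef := by
        rw [Matrix.kronecker_smul, Matrix.one_kronecker_one, hρ'def, sub_self]
        exact Matrix.PosSemidef.zero
      have hσtr : (((c:ℝ):ℂ) • (1 : Matrix B B ℂ)).trace.re ≤ (2:ℝ) ^ (-x : ℝ) := by
        rw [Matrix.trace_smul, smul_eq_mul, Complex.re_ofReal_mul, Matrix.trace_one]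
        have h1 : c ≤ (2:ℝ) ^ (-x : ℝ) / (Fintype.card B : ℝ) := min_le_left _ _
        rw [le_div_iff₀ hcardB] at h1
        simpa using h1
      have hHge : x ≤ Hmin ρ' :=
        Hmin_ge hρ'psd (by rw [hρ'tr]; positivity)
          (psd_smul Matrix.PosSemidef.one hc.le) hσfeas hσtr
      have hmem : Hmin ρ' ∈ {x : ℝ | ∃ ρ'' : Matrix (A × B) (A × B) ℂ, ρ''.PosSemidef ∧
          ρ''.trace.re ≤ 1 ∧ purifiedDist ρ'' M ≤ ε ∧ x = Hmin ρ''} :=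
        ⟨ρ', hρ'psd, htr1, le_trans (purifiedDist_le_one _ _) hε1, rfl⟩
      have := hu hmem
      linarith
    rw [hzero]
    have h1 : m ≤ HminSmooth ε (ρ i₀) := Finset.inf'_le _ (Finset.mem_univ i₀)
    rw [hzero] at h1
    exact h1
  · -- ε < 1
    have hε2 : 0 < 1 - ε^2 := by nlinarith
    have hbddmix : BddAbove {x : ℝ | ∃ ρ' : Matrix (A × B) (A × B) ℂ, ρ'.PosSemidef ∧
        ρ'.trace.re ≤ 1 ∧ purifiedDist ρ' ρbar ≤ ε ∧ x = Hmin ρ'} := by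
      refine ⟨- Real.logb 2 ((1 - ε^2) / (Fintype.card A : ℝ)), ?_⟩
      rintro x ⟨ρ'', hpsd, htr, hP, rfl⟩
      exact Hmin_le hpsd hε2 (smooth_trace_lb hpsd hρbar hρbartr hP)
    refine le_of_forall_pos_le_add fun δ hδ => ?_
    have hchoice : ∀ i : ι, ∃ ρt : Matrix (A × B) (A × B) ℂ, ρt.PosSemidef ∧
        ρt.trace.re ≤ 1 ∧ purifiedDist ρt (ρ i) ≤ ε ∧ m - δ/2 < Hmin ρt := by
      intro i
      have hne : {x : ℝ | ∃ ρ' : Matrix (A × B) (A × B) ℂ, ρ'.PosSemidef ∧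
          ρ'.trace.re ≤ 1 ∧ purifiedDist ρ' (ρ i) ≤ ε ∧ x = Hmin ρ'}.Nonempty := by
        refine ⟨Hmin (ρ i), ρ i, hρ i, ?_, ?_, rfl⟩
        · rw [hρ1 i]; norm_num
        · rw [purifiedDist_self_zero (hρ i) (by rw [hρ1 i]; norm_num)]; exact hε
      have hlt : m - δ/2 < HminSmooth ε (ρ i) := by
        have h1 : m ≤ HminSmooth ε (ρ i) :=
          Finset.inf'_le (fun i => HminSmooth ε (ρ i)) (Finset.mem_univ i)
        linarith
      have hlt2 : m - δ/2 < sSup {x : ℝ | ∃ ρ' : Matrix (A × B) (A × B) ℂ, ρ'.PosSemidef ∧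
          ρ'.trace.re ≤ 1 ∧ purifiedDist ρ' (ρ i) ≤ ε ∧ x = Hmin ρ'} := hlt
      obtain ⟨x, hxmem, hxlt⟩ := exists_lt_of_lt_csSup hne hlt2
      obtain ⟨ρt, h1, h2, h3, rfl⟩ := hxmem
      exact ⟨ρt, h1, h2, h3, hxlt⟩
    choose ρt hρtpsd hρttr hρtP hρtHm using hchoice
    have htlb : ∀ i, 1 - ε^2 ≤ (ρt i).trace.re := fun i =>
      smooth_trace_lb (hρtpsd i) (hρ i) (by rw [hρ1 i]; norm_num) (hρtP i)
    have hσchoice : ∀ i : ι, ∃ σ : Matrix B B ℂ, σ.PosSemidef ∧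
        ((1 : Matrix A A ℂ) ⊗ₖ σ - ρt i).PosSemidef ∧
        σ.trace.re < (2:ℝ) ^ (-(m - δ/2) : ℝ) := by
      intro i
      have hpos : 0 < sInf (FeasSet (ρt i)) :=
        sInf_feas_pos (hρtpsd i) (lt_of_lt_of_le hε2 (htlb i))
      have hlt : sInf (FeasSet (ρt i)) < (2:ℝ) ^ (-(m - δ/2) : ℝ) := by
        have h1 := hρtHm i
        rw [Hmin_eq] at h1
        have h2 : Real.logb 2 (sInf (FeasSet (ρt i))) < -(m - δ/2) := by linarith
        exact (Real.logb_lt_iff_lt_rpow (by norm_num) hpos).mp h2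
      obtain ⟨t, htmem, htlt⟩ := exists_lt_of_csInf_lt (FeasSet_nonempty (hρtpsd i)) hlt
      obtain ⟨σ, h1, h2, rfl⟩ := htmem
      exact ⟨σ, h1, h2, htlt⟩
    choose σsel hσpsd hσfeas hσtr using hσchoice
    set ρtbar := ∑ i, (p i : ℂ) • ρt i with hρtbardef
    set σbar := ∑ i, (p i : ℂ) • σsel i with hσbardef
    have hρtbarpsd : ρtbar.PosSemidef := psd_sum _ _ fun i _ => psd_smul (hρtpsd i) (hp i)
    have hρtbartr : ρtbar.trace.re = ∑ i, p i * (ρt i).trace.re := trace_re_sum_smul _ _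
    have htrle1 : ρtbar.trace.re ≤ 1 := by
      rw [hρtbartr, ← hp1]
      exact Finset.sum_le_sum fun i _ => mul_le_of_le_one_right (hp i) (hρttr i)
    have htrge : 1 - ε^2 ≤ ρtbar.trace.re := by
      rw [hρtbartr]
      calc 1 - ε^2 = ∑ i, p i * (1 - ε^2) := by rw [← Finset.sum_mul, hp1, one_mul]
        _ ≤ ∑ i, p i * (ρt i).trace.re :=
            Finset.sum_le_sum fun i _ => mul_le_mul_of_nonneg_left (htlb i) (hp i)
    have hPbar : purifiedDist ρtbar ρbar ≤ ε := by
      set g0 := Finset.univ.inf' Finset.univ_nonempty (fun i => Gfid (ρt i) (ρ i)) with hg0def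
      obtain ⟨j, _, hj⟩ :=
        Finset.exists_mem_eq_inf' Finset.univ_nonempty (fun i => Gfid (ρt i) (ρ i))
      have hg0j : g0 = Gfid (ρt j) (ρ j) := hj
      have hg0nn : 0 ≤ g0 := by rw [hg0j]; exact Gfid_nonneg (hρtpsd j) (hρ j)
      have hsup := Gfid_superadd (fun i => (p i : ℂ) • ρt i) (fun i => (p i : ℂ) • ρ i)
        (fun i => psd_smul (hρtpsd i) (hp i)) (fun i => psd_smul (hρ i) (hp i))
      have hsum_eq : ∑ i, Gfid ((p i : ℂ) • ρt i) ((p i : ℂ) • ρ i)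
          = ∑ i, p i * Gfid (ρt i) (ρ i) :=
        Finset.sum_congr rfl fun i _ => Gfid_smul (hρtpsd i) (hρ i) (hp i)
      have hg0le : g0 ≤ Gfid ρtbar ρbar := by
        calc g0 = ∑ i, p i * g0 := by rw [← Finset.sum_mul, hp1, one_mul]
          _ ≤ ∑ i, p i * Gfid (ρt i) (ρ i) := Finset.sum_le_sum fun i _ =>
              mul_le_mul_of_nonneg_left (Finset.inf'_le _ (Finset.mem_univ i)) (hp i)
          _ = ∑ i, Gfid ((p i : ℂ) • ρt i) ((p i : ℂ) • ρ i) := hsum_eq.symm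
          _ ≤ Gfid ρtbar ρbar := hsup
      have hfg : fidelity (ρt j) (ρ j) ≤ fidelity ρtbar ρbar := by
        rw [fidelity_eq_Gfid_sq (hρtpsd j) (hρ j), fidelity_eq_Gfid_sq hρtbarpsd hρbar]
        exact pow_le_pow_left₀ (by rw [← hg0j]; exact hg0nn) (le_trans (hg0j ▸ le_refl _) hg0le) 2
      unfold purifiedDist
      have e1 : gFidelity ρtbar ρbar = fidelity ρtbar ρbar := gfid_eq_fid hρbartr
      have e2 : gFidelity (ρt j) (ρ j) = fidelity (ρt j) (ρ j) :=
        gfid_eq_fid (by rw [hρ1 j]; norm_num)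
      have hPj := hρtP j
      unfold purifiedDist at hPj
      rw [e2] at hPj
      rw [e1]
      calc Real.sqrt (1 - fidelity ρtbar ρbar)
          ≤ Real.sqrt (1 - fidelity (ρt j) (ρ j)) := Real.sqrt_le_sqrt (by linarith)
        _ ≤ ε := hPj
    have hσbarpsd : σbar.PosSemidef := psd_sum _ _ fun i _ => psd_smul (hσpsd i) (hp i)
    have hfeasbar : ((1 : Matrix A A ℂ) ⊗ₖ σbar - ρtbar).PosSemidef := by
      rw [hσbardef, kron_sum, hρtbardef, ← Finset.sum_sub_distrib]
      refine psd_sum _ _ fun i _ => ?_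
      rw [← smul_sub]
      exact psd_smul (hσfeas i) (hp i)
    have hσbartr : σbar.trace.re ≤ (2:ℝ) ^ (-(m - δ) : ℝ) := by
      have h1 : σbar.trace.re = ∑ i, p i * (σsel i).trace.re := trace_re_sum_smul _ _
      have h2 : σbar.trace.re ≤ (2:ℝ) ^ (-(m - δ/2) : ℝ) := by
        rw [h1]
        calc ∑ i, p i * (σsel i).trace.re
            ≤ ∑ i, p i * (2:ℝ) ^ (-(m - δ/2) : ℝ) :=
              Finset.sum_le_sum fun i _ => mul_le_mul_of_nonneg_left (hσtr i).le (hp i)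
          _ = (2:ℝ) ^ (-(m - δ/2) : ℝ) := by rw [← Finset.sum_mul, hp1, one_mul]
      refine le_trans h2 ?_
      apply Real.rpow_le_rpow_of_exponent_le (by norm_num)
      linarith
    have hHmbar : m - δ ≤ Hmin ρtbar :=
      Hmin_ge hρtbarpsd (lt_of_lt_of_le hε2 htrge) hσbarpsd hfeasbar hσbartr
    have hfinal : Hmin ρtbar ≤ HminSmooth ε ρbar := by
      have hmem : Hmin ρtbar ∈ {x : ℝ | ∃ ρ' : Matrix (A × B) (A × B) ℂ, ρ'.PosSemidef ∧
          ρ'.trace.re ≤ 1 ∧ purifiedDist ρ' ρbar ≤ ε ∧ x = Hmin ρ'} :=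
        ⟨ρtbar, hρtbarpsd, htrle1, hPbar, rfl⟩
      exact le_csSup hbddmix hmem
    linarith
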